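/- Let $0 < s < \min\{1, N/2\}$, let $a_0 > 0$ be constant, and let $f \in C^1(\mathbb{R})$ with subcritical growth. Suppose there exists $0 \le \delta \le 2s/(N-2s)$ such that $2_s^* F(t) \le f(t)t + \delta a_0 t^2$ for all $t \in \mathbb{R}$. If $u \in H^s(\mathbb{R}^N)$ is a weak solution of $(-\Delta)^s u + a_0 u = f(u)$ satisfying the Pohozaev identity $\int F(u) - \frac{a_0}{2}u^2\,dx = \frac{N-2s}{2N}\int |(-\Delta)^{s/2}u|^2\,dx$, then $u \equiv 0$. -/

import Mathlib

open MeasureTheory Real Filter Topology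
open scoped FourierTransform ENNReal NNReal

noncomputable section

abbrev Esp (N : ℕ) := EuclideanSpace ℝ (Fin N)

def cplx {N : ℕ} (u : Esp N → ℝ) : Esp N → ℂ := fun x => (u x : ℂ)

/-- homogeneous fractional Sobolev seminorm squared, `[u]_s² = ∫ |ξ|^{2s} |𝓕u|²`. -/
def fracSq (N : ℕ) (s : ℝ) (u : Esp N → ℝ) : ℝ :=
  ∫ ξ : Esp N, ‖ξ‖ ^ (2 * s) * ‖𝓕 (cplx u) ξ‖ ^ 2

/-- the `H^s` inner product `(u,v) = ∫ (1+|ξ|^{2s}) 𝓕u conj(𝓕v)` (real part). -/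
def hsInner (N : ℕ) (s : ℝ) (u v : Esp N → ℝ) : ℝ :=
  (∫ ξ : Esp N, (((1 + ‖ξ‖ ^ (2 * s) : ℝ)) : ℂ) *
      (𝓕 (cplx u) ξ * (starRingEnd ℂ) (𝓕 (cplx v) ξ))).re

/-- the `H^s` norm squared. -/
def hsNormSq (N : ℕ) (s : ℝ) (u : Esp N → ℝ) : ℝ :=
  fracSq N s u + ∫ x : Esp N, u x ^ 2

/-- membership in the inhomogeneous fractional Sobolev space `H^s(ℝ^N)`. -/
def MemHs (N : ℕ) (s : ℝ) (u : Esp N → ℝ) : Prop :=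
  MemLp u 2 (volume : Measure (Esp N)) ∧
    Integrable (fun ξ : Esp N => ‖ξ‖ ^ (2 * s) * ‖𝓕 (cplx u) ξ‖ ^ 2) volume

/-- the fractional Dirichlet pairing `[u,v]_s = ∫ (-Δ)^{s/2}u (-Δ)^{s/2}v`. -/
def fracInner (N : ℕ) (s : ℝ) (u v : Esp N → ℝ) : ℝ :=
  (∫ ξ : Esp N, ((‖ξ‖ ^ (2 * s) : ℝ) : ℂ) *
      (𝓕 (cplx u) ξ * (starRingEnd ℂ) (𝓕 (cplx v) ξ))).re

/-- primitive of an autonomous nonlinearity. -/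
def F0 (f : ℝ → ℝ) (t : ℝ) : ℝ := ∫ τ in (0 : ℝ)..t, f τ


section helpers

variable {N : ℕ}

lemma integrable_cplx_iff {w : Esp N → ℝ} :
    Integrable (cplx w) (volume : Measure (Esp N)) ↔ Integrable w volume := by
  constructor
  · intro h
    simpa [cplx] using h.re
  · intro h
    exact h.ofReal

lemma fourier_eq_zero_of_not_integrable {w : Esp N → ℂ}
    (hw : ¬ Integrable w (volume : Measure (Esp N))) : ∀ ξ, 𝓕 w ξ = 0 := by
  intro ξ
  rw [Real.fourier_eq]
  exact integral_undef (fun h => hw ((Real.fourierIntegral_convergent_iff ξ).mp h))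

lemma fracInner_self_eq (s : ℝ) (u : Esp N → ℝ) : fracInner N s u u = fracSq N s u := by
  unfold fracInner fracSq
  have h : (fun ξ : Esp N => ((‖ξ‖ ^ (2 * s) : ℝ) : ℂ) *
      (𝓕 (cplx u) ξ * (starRingEnd ℂ) (𝓕 (cplx u) ξ)))
      = fun ξ : Esp N => ((‖ξ‖ ^ (2 * s) * ‖𝓕 (cplx u) ξ‖ ^ 2 : ℝ) : ℂ) := by
    funext ξ
    rw [Complex.mul_conj]
    rw [Complex.ofReal_mul]
    norm_cast
    rw [Complex.normSq_eq_norm_sq]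
  rw [h]
  have h2 : (∫ ξ : Esp N, ((‖ξ‖ ^ (2 * s) * ‖𝓕 (cplx u) ξ‖ ^ 2 : ℝ) : ℂ))
      = ((∫ ξ : Esp N, ‖ξ‖ ^ (2 * s) * ‖𝓕 (cplx u) ξ‖ ^ 2 : ℝ) : ℂ) := integral_ofReal
  rw [h2, Complex.ofReal_re]

lemma fracInner_zero_of_fourier_zero (s : ℝ) (u v : Esp N → ℝ)
    (h : ∀ᵐ ξ : Esp N ∂(volume : Measure (Esp N)), 𝓕 (cplx u) ξ = 0) :
    fracInner N s u v = 0 := by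
  unfold fracInner
  have h2 : (fun ξ : Esp N => ((‖ξ‖ ^ (2 * s) : ℝ) : ℂ) *
      (𝓕 (cplx u) ξ * (starRingEnd ℂ) (𝓕 (cplx v) ξ)))
      =ᵐ[(volume : Measure (Esp N))] (fun _ => (0 : ℂ)) := by
    filter_upwards [h] with ξ hξ
    rw [hξ]
    ring
  rw [integral_congr_ae h2, integral_zero]
  simp

lemma exists_schwartz {g : Esp N → ℝ} (hg : ContDiff ℝ (⊤ : ℕ∞) g)
    (hsupp : HasCompactSupport g) :
    ∃ G : SchwartzMap (Esp N) ℂ, ⇑G = fun x => (g x : ℂ) := by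
  have hgc : ContDiff ℝ ((⊤ : ℕ∞) : WithTop ℕ∞) (fun x : Esp N => (g x : ℂ)) :=
    Complex.ofRealCLM.contDiff.comp hg
  have hsc : HasCompactSupport (fun x : Esp N => (g x : ℂ)) :=
    hsupp.comp_left Complex.ofReal_zero
  refine ⟨⟨fun x => (g x : ℂ), hgc, ?_⟩, rfl⟩
  intro k n
  have h1 : Continuous (fun x : Esp N =>
      ‖x‖ ^ k * ‖iteratedFDeriv ℝ n (fun x : Esp N => (g x : ℂ)) x‖) :=
    ((continuous_norm.pow k).mul
      ((hgc.continuous_iteratedFDeriv (by exact_mod_cast le_top)).norm))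
  have h2 : HasCompactSupport (fun x : Esp N =>
      ‖x‖ ^ k * ‖iteratedFDeriv ℝ n (fun x : Esp N => (g x : ℂ)) x‖) :=
    ((hsc.iteratedFDeriv n).norm).mul_left
  obtain ⟨C, hC⟩ := h1.bounded_above_of_compact_support h2
  refine ⟨C, fun x => ?_⟩
  have h3 := hC x
  rw [Real.norm_eq_abs] at h3
  exact (le_abs_self _).trans h3

lemma ae_zero_of_fourier_zero (hN : 0 < N) {u : Esp N → ℝ}
    (hu1 : Integrable u (volume : Measure (Esp N)))
    (h : ∀ᵐ ξ : Esp N ∂(volume : Measure (Esp N)), 𝓕 (cplx u) ξ = 0) :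
    u =ᵐ[(volume : Measure (Esp N))] (fun _ => (0 : ℝ)) := by
  have huc : Integrable (cplx u) (volume : Measure (Esp N)) := hu1.ofReal
  apply ae_eq_zero_of_integral_contDiff_smul_eq_zero hu1.locallyIntegrable
  intro g hgs hgc
  obtain ⟨G, hG⟩ := exists_schwartz hgs hgc
  set H : SchwartzMap (Esp N) ℂ := (FourierTransform.fourierCLE ℂ (SchwartzMap (Esp N) ℂ)).symm G with hHdef
  have hFH : 𝓕 (⇑H) = ⇑G := by
    have h1 : FourierTransform.fourierCLE ℂ (SchwartzMap (Esp N) ℂ) H = G :=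
      (FourierTransform.fourierCLE ℂ (SchwartzMap (Esp N) ℂ)).apply_symm_apply G
    rw [← h1]
    rw [FourierTransform.fourierCLE_apply, SchwartzMap.fourier_coe]
  have hmul := VectorFourier.integral_bilin_fourierIntegral_eq_flip
      (μ := (volume : Measure (Esp N))) (ν := (volume : Measure (Esp N)))
      (L := innerₗ (Esp N)) (M := ContinuousLinearMap.mul ℂ ℂ) (f := cplx u) (g := ⇑H)
      Real.continuous_fourierChar continuous_inner huc H.integrable
  rw [flip_innerₗ] at hmul
  have hLHS : (∫ ξ : Esp N, ContinuousLinearMap.mul ℂ ℂ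
      (VectorFourier.fourierIntegral 𝐞 volume (innerₗ (Esp N)) (cplx u) ξ) (H ξ)) = 0 := by
    have heq : (fun ξ : Esp N => ContinuousLinearMap.mul ℂ ℂ
        (VectorFourier.fourierIntegral 𝐞 volume (innerₗ (Esp N)) (cplx u) ξ) (H ξ))
        =ᵐ[(volume : Measure (Esp N))] (fun _ => (0 : ℂ)) := by
      filter_upwards [h] with ξ hξ
      have : VectorFourier.fourierIntegral 𝐞 volume (innerₗ (Esp N)) (cplx u) ξ = 0 := hξ
      simp [this]
    rw [integral_congr_ae heq, integral_zero]
  rw [hLHS] at hmul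
  have hRHS : (∫ x : Esp N, ContinuousLinearMap.mul ℂ ℂ (cplx u x)
      (VectorFourier.fourierIntegral 𝐞 volume (innerₗ (Esp N)) (⇑H) x))
      = ((∫ x : Esp N, u x * g x : ℝ) : ℂ) := by
    have heq : (fun x : Esp N => ContinuousLinearMap.mul ℂ ℂ (cplx u x)
        (VectorFourier.fourierIntegral 𝐞 volume (innerₗ (Esp N)) (⇑H) x))
        = fun x : Esp N => ((u x * g x : ℝ) : ℂ) := by
      funext x
      have h3 : VectorFourier.fourierIntegral 𝐞 volume (innerₗ (Esp N)) (⇑H) x = 𝓕 (⇑H) x := rfl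
      rw [h3, hFH, hG]
      simp [cplx]
    rw [heq]
    exact integral_ofReal
  rw [hRHS] at hmul
  have : (∫ x : Esp N, u x * g x) = 0 := by
    have := hmul.symm
    exact_mod_cast this
  have hgoal : (∫ x : Esp N, g x • u x) = ∫ x : Esp N, u x * g x := by
    congr 1
    funext x
    simp [smul_eq_mul, mul_comm]
  rw [hgoal, this]

end helpers



section calc1

lemma claim1_pos {p c : ℝ} (hp : 2 < p) {F f : ℝ → ℝ}
    (hder : ∀ t, HasDerivAt F (f t) t)
    (hineq' : ∀ t, 0 < t → p * F t ≤ f t * t + (p - 2) * c * t ^ 2)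
    (hlim : Tendsto (fun t => F t * t ^ (-p)) atTop (𝓝 0)) :
    ∀ t, 0 < t → F t ≤ c * t ^ 2 := by
  set H : ℝ → ℝ := fun t => (F t - c * t ^ 2) * t ^ (-p) with hHdef
  have hHder : ∀ t, 0 < t → HasDerivAt H
      ((f t - c * (2 * t ^ 1)) * t ^ (-p) + (F t - c * t ^ 2) * (-p * t ^ (-p - 1))) t := by
    intro t ht
    have h1 : HasDerivAt (fun t : ℝ => F t - c * t ^ 2) (f t - c * (2 * t ^ 1)) t :=
      (hder t).sub ((hasDerivAt_pow 2 t).const_mul c)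
    have h2 : HasDerivAt (fun t : ℝ => t ^ (-p)) (-p * t ^ (-p - 1)) t :=
      Real.hasDerivAt_rpow_const (Or.inl (ne_of_gt ht))
    exact h1.mul h2
  have hmono : MonotoneOn H (Set.Ioi (0 : ℝ)) := by
    apply monotoneOn_of_deriv_nonneg (convex_Ioi 0)
    · intro t ht
      exact ((hHder t ht).continuousAt).continuousWithinAt
    · intro t ht
      rw [interior_Ioi] at ht
      exact ((hHder t ht).differentiableAt).differentiableWithinAt
    · intro t ht
      rw [interior_Ioi] at ht
      rw [(hHder t ht).deriv]
      have htp1 : (0 : ℝ) < t ^ (-p - 1) := Real.rpow_pos_of_pos ht _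
      have hrw : t ^ (-p) = t ^ (-p - 1) * t := by
        rw [← Real.rpow_add_one (ne_of_gt ht) (-p - 1)]
        norm_num
      rw [hrw]
      have hkey : (f t - c * (2 * t ^ 1)) * (t ^ (-p - 1) * t)
          + (F t - c * t ^ 2) * (-p * t ^ (-p - 1))
          = t ^ (-p - 1) * ((f t * t + (p - 2) * c * t ^ 2) - p * F t) := by ring
      rw [hkey]
      exact mul_nonneg htp1.le (by linarith [hineq' t ht])
  have hlimH : Tendsto H atTop (𝓝 0) := by
    have h2 : Tendsto (fun t : ℝ => c * t ^ (2 - p)) atTop (𝓝 0) := by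
      have h3 := (tendsto_rpow_neg_atTop (by linarith : (0:ℝ) < p - 2)).const_mul c
      simp only [mul_zero] at h3
      refine h3.congr' ?_
      filter_upwards with t
      rw [neg_sub]
    have heq : (fun t : ℝ => F t * t ^ (-p) - c * t ^ (2 - p)) =ᶠ[atTop] H := by
      filter_upwards [eventually_gt_atTop (0:ℝ)] with t ht
      have h4 : t ^ (2 - p) = t ^ 2 * t ^ (-p) := by
        rw [show (2 - p) = (2:ℝ) + (-p) by ring, Real.rpow_add ht,
          show ((2:ℝ)) = ((2:ℕ):ℝ) by norm_num, Real.rpow_natCast]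
      rw [hHdef]
      simp only
      rw [h4]
      ring
    have h5 := (hlim.sub h2)
    rw [sub_zero] at h5
    exact h5.congr' heq
  intro t ht
  have hle : H t ≤ 0 := by
    apply ge_of_tendsto hlimH
    filter_upwards [eventually_ge_atTop t] with τ hτ
    exact hmono (Set.mem_Ioi.mpr ht) (Set.mem_Ioi.mpr (lt_of_lt_of_le ht hτ)) hτ
  have htp : (0:ℝ) < t ^ (-p) := Real.rpow_pos_of_pos ht _
  by_contra hcon
  push_neg at hcon
  have : 0 < (F t - c * t ^ 2) * t ^ (-p) := mul_pos (by linarith) htp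
  rw [hHdef] at hle
  simp only at hle
  linarith

lemma aux_tendsto {p : ℝ} (hp : 2 < p) {G : ℝ → ℝ}
    (hb : ∀ ε : ℝ, 0 < ε → ∃ C : ℝ, 0 < C ∧ ∃ q : ℝ, 2 < q ∧ q < p ∧
      ∀ t : ℝ, 1 ≤ t → |G t| ≤ ε * (t ^ 2 / 2 + t ^ p / p) + C / q * t ^ q) :
    Tendsto (fun t => G t * t ^ (-p)) atTop (𝓝 0) := by
  rw [Metric.tendsto_nhds]
  intro ε hε
  obtain ⟨C, hC, q, hq2, hqp, hGb⟩ := hb (ε/2) (by linarith)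
  have h1 : Tendsto (fun t : ℝ => t ^ (2 - p)) atTop (𝓝 0) := by
    have := tendsto_rpow_neg_atTop (by linarith : (0:ℝ) < p - 2)
    refine this.congr' ?_
    filter_upwards with t
    rw [neg_sub]
  have h2 : Tendsto (fun t : ℝ => t ^ (q - p)) atTop (𝓝 0) := by
    have := tendsto_rpow_neg_atTop (by linarith : (0:ℝ) < p - q)
    refine this.congr' ?_
    filter_upwards with t
    rw [neg_sub]
  have hD : Tendsto (fun t : ℝ => ε/2 * (t ^ (2 - p) / 2 + 1/p) + C/q * t ^ (q - p))
      atTop (𝓝 (ε/2 * (0 / 2 + 1/p) + C/q * 0)) :=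
    (((h1.div_const 2).add tendsto_const_nhds).const_mul (ε/2)).add (h2.const_mul (C/q))
  have hval : ε/2 * (0 / 2 + 1/p) + C/q * 0 < ε := by
    have hp0 : (0:ℝ) < p := by linarith
    have : (1:ℝ)/p < 1 := by rw [div_lt_one hp0]; linarith
    have h6 : ε/2 * (1/p) < ε/2 * 1 := by
      apply mul_lt_mul_of_pos_left this (by linarith)
    simp only [zero_div, zero_add, mul_zero, add_zero]
    linarith
  have hev := hD.eventually_lt_const hval
  filter_upwards [hev, eventually_ge_atTop (1:ℝ)] with t hDt ht1
  have ht0 : (0:ℝ) < t := by linarith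
  have htp : (0:ℝ) < t ^ (-p) := Real.rpow_pos_of_pos ht0 _
  rw [Real.dist_eq, sub_zero, abs_mul, abs_of_pos htp]
  calc |G t| * t ^ (-p)
      ≤ (ε/2 * (t ^ 2 / 2 + t ^ p / p) + C/q * t ^ q) * t ^ (-p) :=
        mul_le_mul_of_nonneg_right (hGb t ht1) htp.le
    _ = ε/2 * ((t ^ 2 * t ^ (-p)) / 2 + (t ^ p * t ^ (-p))/p) + C/q * (t ^ q * t ^ (-p)) := by
        ring
    _ = ε/2 * (t ^ (2 - p) / 2 + 1/p) + C/q * t ^ (q - p) := by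
        have e2 : t ^ 2 * t ^ (-p) = t ^ (2 - p) := by
          rw [show (2 - p) = (2:ℝ) + (-p) by ring, Real.rpow_add ht0,
            show ((2:ℝ)) = ((2:ℕ):ℝ) by norm_num, Real.rpow_natCast]
        have ep : t ^ p * t ^ (-p) = 1 := by
          rw [← Real.rpow_add ht0]
          simp
        have eq' : t ^ q * t ^ (-p) = t ^ (q - p) := by
          rw [show (q - p) = q + (-p) by ring, Real.rpow_add ht0]
        rw [e2, ep, eq']
    _ < ε := hDt

lemma int_abs_rpow {e t : ℝ} (he : 0 < e) (ht : 0 ≤ t) :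
    ∫ τ in (0:ℝ)..t, |τ| ^ e = t ^ (e + 1) / (e + 1) := by
  have h1 : Set.EqOn (fun τ : ℝ => |τ| ^ e) (fun τ : ℝ => τ ^ e) (Set.uIcc 0 t) := by
    intro τ hτ
    rw [Set.uIcc_of_le ht] at hτ
    simp only
    rw [abs_of_nonneg hτ.1]
  rw [intervalIntegral.integral_congr h1, integral_rpow (Or.inl (by linarith))]
  rw [Real.zero_rpow (by linarith : e + 1 ≠ 0)]
  ring

lemma int_abs_id {t : ℝ} (ht : 0 ≤ t) :
    ∫ τ in (0:ℝ)..t, |τ| = t ^ 2 / 2 := by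
  have h1 : Set.EqOn (fun τ : ℝ => |τ|) (fun τ : ℝ => τ) (Set.uIcc 0 t) := by
    intro τ hτ
    rw [Set.uIcc_of_le ht] at hτ
    simp only
    rw [abs_of_nonneg hτ.1]
  rw [intervalIntegral.integral_congr h1, integral_id]
  ring

lemma F0_abs_le {f : ℝ → ℝ} (hf : Continuous f) {ε C e1 e2 : ℝ}
    (hε : 0 ≤ ε) (hC : 0 ≤ C) (he1 : 1 ≤ e1) (he2 : 1 ≤ e2)
    (hb : ∀ t : ℝ, |f t| ≤ ε * (|t| + |t| ^ e1) + C * |t| ^ e2) :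
    ∀ t : ℝ, 0 ≤ t →
      |F0 f t| ≤ ε * (t ^ 2 / 2 + t ^ (e1 + 1) / (e1 + 1)) + C / (e2 + 1) * t ^ (e2 + 1) ∧
      |F0 f (-t)| ≤ ε * (t ^ 2 / 2 + t ^ (e1 + 1) / (e1 + 1)) + C / (e2 + 1) * t ^ (e2 + 1) := by
  intro t ht
  set B : ℝ → ℝ := fun τ => ε * (|τ| + |τ| ^ e1) + C * |τ| ^ e2 with hBdef
  have hBcont : Continuous B := by
    apply Continuous.add
    · apply Continuous.mul continuous_const
      exact continuous_abs.add (continuous_abs.rpow_const (fun x => Or.inr (by linarith)))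
    · exact Continuous.mul continuous_const
        (continuous_abs.rpow_const (fun x => Or.inr (by linarith)))
  have hint1 : IntervalIntegrable (fun τ : ℝ => |τ|) volume 0 t :=
    continuous_abs.intervalIntegrable 0 t
  have hint2 : IntervalIntegrable (fun τ : ℝ => |τ| ^ e1) volume 0 t :=
    (continuous_abs.rpow_const (fun x => Or.inr (by linarith))).intervalIntegrable 0 t
  have hint3 : IntervalIntegrable (fun τ : ℝ => |τ| ^ e2) volume 0 t :=
    (continuous_abs.rpow_const (fun x => Or.inr (by linarith))).intervalIntegrable 0 t
  have hBval : ∫ τ in (0:ℝ)..t, B τ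
      = ε * (t ^ 2 / 2 + t ^ (e1 + 1) / (e1 + 1)) + C / (e2 + 1) * t ^ (e2 + 1) := by
    rw [hBdef]
    rw [intervalIntegral.integral_add (((hint1.add hint2)).const_mul ε) (hint3.const_mul C)]
    rw [intervalIntegral.integral_const_mul, intervalIntegral.integral_const_mul]
    rw [intervalIntegral.integral_add hint1 hint2]
    rw [int_abs_id ht, int_abs_rpow (by linarith : (0:ℝ) < e1) ht,
      int_abs_rpow (by linarith : (0:ℝ) < e2) ht]
    ring
  constructor
  · calc |F0 f t| = |∫ τ in (0:ℝ)..t, f τ| := rfl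
      _ ≤ ∫ τ in (0:ℝ)..t, |f τ| := intervalIntegral.abs_integral_le_integral_abs ht
      _ ≤ ∫ τ in (0:ℝ)..t, B τ := by
          apply intervalIntegral.integral_mono_on ht (hf.abs.intervalIntegrable 0 t)
            (hBcont.intervalIntegrable 0 t)
          intro τ _
          exact hb τ
      _ = _ := hBval
  · have hsym : F0 f (-t) = -(∫ τ in (-t)..(0:ℝ), f τ) := by
      rw [F0, intervalIntegral.integral_symm]
    have habs : |F0 f (-t)| = |∫ τ in (-t)..(0:ℝ), f τ| := by rw [hsym, abs_neg]
    have hBneg : ∫ τ in (-t)..(0:ℝ), B τ = ∫ τ in (0:ℝ)..t, B τ := by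
      have h0 : ∫ τ in (0:ℝ)..t, B (-τ) = ∫ τ in (-t)..(-(0:ℝ)), B τ :=
        intervalIntegral.integral_comp_neg B
      have h1 : ∀ τ : ℝ, B (-τ) = B τ := by
        intro τ
        rw [hBdef]
        simp only [abs_neg]
      simp only [h1, neg_zero] at h0
      rw [← h0]
    rw [habs, ← hBval, ← hBneg]
    calc |∫ τ in (-t)..(0:ℝ), f τ| ≤ ∫ τ in (-t)..(0:ℝ), |f τ| :=
          intervalIntegral.abs_integral_le_integral_abs (by linarith)
      _ ≤ ∫ τ in (-t)..(0:ℝ), B τ := by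
          apply intervalIntegral.integral_mono_on (by linarith : -t ≤ 0)
            (hf.abs.intervalIntegrable _ _) (hBcont.intervalIntegrable _ _)
          intro τ _
          exact hb τ

end calc1

set_option maxHeartbeats 1000000

/-- nonexistence for constant positive potential. If
`0 ≤ δ ≤ 2s/(N-2s)` and `2_s^* F(t) ≤ f(t)t + δ a₀ t²` for all `t`, then any weak
solution `u ∈ Hˢ(ℝᴺ)` of `(-Δ)ˢu + a₀ u = f(u)` satisfying the Pohozaev identity
vanishes identically. -/
theorem nonexistence_constant_potential
    (N : ℕ) (s : ℝ) (hN : 0 < N) (hs : 0 < s) (hs1 : s < 1) (hsN : 2 * s < (N : ℝ))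
    (a₀ : ℝ) (ha₀ : 0 < a₀)
    (f : ℝ → ℝ) (hf : ContDiff ℝ 1 f)
    (hgrowth : ∀ ε : ℝ, 0 < ε → ∃ C : ℝ, 0 < C ∧
      ∃ p : ℝ, 2 < p ∧ p < 2 * N / ((N : ℝ) - 2 * s) ∧ ∀ t : ℝ,
        |f t| ≤ ε * (|t| + |t| ^ (2 * N / ((N : ℝ) - 2 * s) - 1)) + C * |t| ^ (p - 1))
    (δ : ℝ) (hδ0 : 0 ≤ δ) (hδ : δ ≤ 2 * s / ((N : ℝ) - 2 * s))
    (hineq : ∀ t : ℝ, (2 * N / ((N : ℝ) - 2 * s)) * F0 f t ≤ f t * t + δ * a₀ * t ^ 2)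
    (u : Esp N → ℝ) (hu : MemHs N s u)
    (hsol : ∀ v : Esp N → ℝ, MemHs N s v →
      fracInner N s u v + a₀ * ∫ x : Esp N, u x * v x = ∫ x : Esp N, f (u x) * v x)
    (hpoh : ∫ x : Esp N, (F0 f (u x) - a₀ / 2 * u x ^ 2)
        = ((N : ℝ) - 2 * s) / (2 * N) * fracSq N s u) :
    u =ᵐ[(volume : Measure (Esp N))] (fun _ => (0 : ℝ)) := by
  classical
  set P : ℝ := 2 * N / ((N : ℝ) - 2 * s) with hPdef
  have hNr : (0:ℝ) < N := Nat.cast_pos.mpr hN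
  have hNs : (0:ℝ) < (N:ℝ) - 2 * s := by linarith
  have hP2 : 2 < P := by
    rw [hPdef, lt_div_iff₀ hNs]; linarith
  have hu2 : Integrable (fun x : Esp N => u x ^ 2) volume := hu.1.integrable_sq
  have hApos : 0 ≤ fracSq N s u := by
    apply integral_nonneg
    intro ξ
    positivity
  have hBpos : 0 ≤ ∫ x : Esp N, u x ^ 2 := integral_nonneg fun x => sq_nonneg _
  have hBzero : (∫ x : Esp N, u x ^ 2) = 0 → u =ᵐ[(volume : Measure (Esp N))] (fun _ => (0:ℝ)) := by
    intro h0
    have h1 := (integral_eq_zero_iff_of_nonneg (fun x => sq_nonneg (u x)) hu2).mp h0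
    filter_upwards [h1] with x hx
    have hx' : u x ^ 2 = 0 := by simpa using hx
    exact pow_eq_zero_iff two_ne_zero |>.mp hx'
  have huumul : (∫ x : Esp N, u x * u x) = ∫ x : Esp N, u x ^ 2 := by
    simp_rw [← pow_two]
  rcases em (Integrable (fun x : Esp N => f (u x) * u x) volume) with hT | hT
  swap
  · -- Nehari with junk RHS
    have hne := hsol u hu
    rw [fracInner_self_eq, integral_undef hT, huumul] at hne
    apply hBzero
    by_contra hBne
    have hBpos' : 0 < ∫ x : Esp N, u x ^ 2 := lt_of_le_of_ne hBpos (Ne.symm hBne)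
    nlinarith [mul_pos ha₀ hBpos']
  -- main branch
  have hcont : Continuous f := hf.continuous
  have hder : ∀ t, HasDerivAt (F0 f) (f t) t := fun t =>
    (hcont.integral_hasStrictDerivAt 0 t).hasDerivAt
  set c : ℝ := δ * a₀ / (P - 2) with hcdef
  have hP2ne : P - 2 ≠ 0 := by
    have : (0:ℝ) < P - 2 := by linarith
    exact ne_of_gt this
  have hPc : (P - 2) * c = δ * a₀ := by
    rw [hcdef]
    field_simp
  have hc2 : (P - 2) / 2 = 2 * s / ((N:ℝ) - 2 * s) := by
    rw [hPdef]; field_simp; ring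
  have hcle : c ≤ a₀ / 2 := by
    rw [hcdef, div_le_iff₀ (by linarith : (0:ℝ) < P - 2)]
    have h7 : δ ≤ (P - 2) / 2 := by rw [hc2]; exact hδ
    nlinarith [ha₀.le]
  have hbnd : ∀ ε : ℝ, 0 < ε → ∃ C : ℝ, 0 < C ∧ ∃ q : ℝ, 2 < q ∧ q < P ∧
      ∀ t : ℝ, 1 ≤ t →
        (|F0 f t| ≤ ε * (t ^ 2 / 2 + t ^ P / P) + C / q * t ^ q ∧
         |F0 f (-t)| ≤ ε * (t ^ 2 / 2 + t ^ P / P) + C / q * t ^ q) := by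
    intro ε hε
    obtain ⟨C, hC, q, hq2, hqP, hfb⟩ := hgrowth ε hε
    refine ⟨C, hC, q, hq2, hqP, ?_⟩
    intro t ht
    have h8 := F0_abs_le hcont hε.le hC.le
      (by linarith : (1:ℝ) ≤ P - 1) (by linarith : (1:ℝ) ≤ q - 1) hfb t (by linarith)
    have e1 : P - 1 + 1 = P := by ring
    have e2 : q - 1 + 1 = q := by ring
    rw [e1, e2] at h8
    exact h8
  have hlimpos : Tendsto (fun t => F0 f t * t ^ (-P)) atTop (𝓝 0) := by
    apply aux_tendsto hP2
    intro ε hε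
    obtain ⟨C, hC, q, hq2, hqP, h⟩ := hbnd ε hε
    exact ⟨C, hC, q, hq2, hqP, fun t ht => (h t ht).1⟩
  have hlimneg : Tendsto (fun t => F0 f (-t) * t ^ (-P)) atTop (𝓝 0) := by
    apply aux_tendsto hP2
    intro ε hε
    obtain ⟨C, hC, q, hq2, hqP, h⟩ := hbnd ε hε
    exact ⟨C, hC, q, hq2, hqP, fun t ht => (h t ht).2⟩
  have hclaim : ∀ t : ℝ, F0 f t ≤ a₀ / 2 * t ^ 2 := by
    have hposside : ∀ t, 0 < t → F0 f t ≤ c * t ^ 2 := by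
      apply claim1_pos hP2 hder ?_ hlimpos
      intro t _
      rw [hPc]
      exact hineq t
    have hnegside : ∀ t, 0 < t → F0 f (-t) ≤ c * t ^ 2 := by
      apply claim1_pos hP2 (f := fun τ => -f (-τ)) ?_ ?_ hlimneg
      · intro t
        have h := (hder (-t)).comp t (hasDerivAt_neg t)
        convert h using 1
        · rfl
        · rfl
        · rfl
        · ring
      · intro t _
        rw [hPc]
        have h := hineq (-t)
        have e1 : f (-t) * (-t) = -f (-t) * t := by ring
        have e2 : (-t) ^ 2 = t ^ 2 := by ring
        rw [e1, e2] at h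
        exact h
    intro t
    rcases lt_trichotomy t 0 with h|h|h
    · have h9 := hnegside (-t) (by linarith)
      rw [neg_neg] at h9
      have e2 : (-t) ^ 2 = t ^ 2 := by ring
      rw [e2] at h9
      nlinarith [sq_nonneg t]
    · subst h
      have h10 : F0 f 0 = 0 := by
        rw [F0, intervalIntegral.integral_same]
      rw [h10]
      norm_num
    · have h11 := hposside t h
      nlinarith [sq_nonneg t]
  -- A = 0
  have hintG : (∫ x : Esp N, (F0 f (u x) - a₀ / 2 * u x ^ 2)) ≤ 0 := by
    rcases em (Integrable (fun x : Esp N => F0 f (u x) - a₀ / 2 * u x ^ 2) volume) with hI | hI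
    · apply integral_nonpos
      intro x
      have := hclaim (u x)
      simp only [Pi.zero_apply]
      linarith
    · rw [integral_undef hI]
  have hcoeff : (0:ℝ) < ((N:ℝ) - 2 * s) / (2 * N) := div_pos hNs (by linarith)
  have hA0 : fracSq N s u = 0 := by
    by_contra hne0
    have hA' : 0 < fracSq N s u := lt_of_le_of_ne hApos (Ne.symm hne0)
    nlinarith [mul_pos hcoeff hA', hpoh, hintG]
  haveI : Nontrivial (Esp N) := by
    apply Module.nontrivial_of_finrank_pos (R := ℝ)
    rw [finrank_euclideanSpace_fin]
    exact hN
  have hae_ne : ∀ᵐ ξ : Esp N ∂(volume : Measure (Esp N)), ξ ≠ 0 := by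
    have h11 : (volume : Measure (Esp N)) ({(0 : Esp N)} : Set (Esp N)) = 0 :=
      measure_singleton 0
    rw [ae_iff]
    convert h11 using 2
    ext ξ
    simp
  have hFT0 : ∀ᵐ ξ : Esp N ∂(volume : Measure (Esp N)), 𝓕 (cplx u) ξ = 0 := by
    have h12 : (fun ξ : Esp N => ‖ξ‖ ^ (2*s) * ‖𝓕 (cplx u) ξ‖ ^ 2)
        =ᵐ[(volume : Measure (Esp N))] 0 :=
      (integral_eq_zero_iff_of_nonneg (fun ξ => by positivity) hu.2).mp hA0
    filter_upwards [h12, hae_ne] with ξ h13 hξ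
    have h14 : (0:ℝ) < ‖ξ‖ ^ (2*s) := Real.rpow_pos_of_pos (norm_pos_iff.mpr hξ) _
    have h13' : ‖ξ‖ ^ (2*s) * ‖𝓕 (cplx u) ξ‖ ^ 2 = 0 := by simpa using h13
    have h15 : ‖𝓕 (cplx u) ξ‖ ^ 2 = 0 := by
      rcases mul_eq_zero.mp h13' with h|h
      · exact absurd h (ne_of_gt h14)
      · exact h
    exact norm_eq_zero.mp (pow_eq_zero_iff two_ne_zero |>.mp h15)
  -- gap lemma
  obtain ⟨C₂, hC₂, p₂, hp₂2, hp₂P, hgb₂⟩ := hgrowth (a₀/2) (by linarith)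
  have hm0 : (0:ℝ) < min (P - 2) (p₂ - 2) := lt_min (by linarith) (by linarith)
  set m : ℝ := min (P - 2) (p₂ - 2) with hmdef
  have hβ0 : (0:ℝ) < (a₀/2) / (a₀/2 + C₂) := div_pos (by linarith) (by linarith)
  set β : ℝ := (a₀/2) / (a₀/2 + C₂) with hβdef
  set r : ℝ := min 1 (β ^ m⁻¹) with hrdef
  have hr0 : 0 < r := lt_min one_pos (Real.rpow_pos_of_pos hβ0 _)
  have hr1 : r ≤ 1 := min_le_left _ _
  have hgap : ∀ t : ℝ, t ≠ 0 → |t| < r → f t ≠ a₀ * t := by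
    intro t ht0 htr hcontra
    have hx0 : 0 < |t| := abs_pos.mpr ht0
    have hx1 : |t| ≤ 1 := le_of_lt (lt_of_lt_of_le htr hr1)
    have hb := hgb₂ t
    rw [hcontra, abs_mul, abs_of_pos ha₀] at hb
    have hml : m ≤ P - 2 := min_le_left _ _
    have hml2 : m ≤ p₂ - 2 := min_le_right _ _
    have he1 : |t| ^ (P-1) ≤ |t| * |t| ^ m := by
      rw [show (P - 1) = 1 + (P - 2) by ring, Real.rpow_add hx0, Real.rpow_one]
      exact mul_le_mul_of_nonneg_left
        (Real.rpow_le_rpow_of_exponent_ge hx0 hx1 hml) (abs_nonneg t)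
    have he2 : |t| ^ (p₂-1) ≤ |t| * |t| ^ m := by
      rw [show (p₂ - 1) = 1 + (p₂ - 2) by ring, Real.rpow_add hx0, Real.rpow_one]
      exact mul_le_mul_of_nonneg_left
        (Real.rpow_le_rpow_of_exponent_ge hx0 hx1 hml2) (abs_nonneg t)
    have hcomb : a₀/2 * |t| ≤ ((a₀/2 + C₂) * |t| ^ m) * |t| := by nlinarith
    have h16 : a₀/2 ≤ (a₀/2 + C₂) * |t| ^ m := le_of_mul_le_mul_right hcomb hx0
    have hxm : β ≤ |t| ^ m := by
      rw [hβdef, div_le_iff₀ (by linarith : (0:ℝ) < a₀/2 + C₂)]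
      nlinarith
    have h17 : |t| < β ^ m⁻¹ := lt_of_lt_of_le htr (min_le_right _ _)
    have h18 := Real.rpow_lt_rpow (abs_nonneg t) h17 hm0
    rw [← Real.rpow_mul hβ0.le, inv_mul_cancel₀ (ne_of_gt hm0), Real.rpow_one] at h18
    linarith
  -- linear bound near zero
  obtain ⟨C₁, hC₁, p₁, hp₁2, hp₁P, hgb₁⟩ := hgrowth 1 one_pos
  have hf0 : f 0 = 0 := by
    have h := hgb₁ 0
    rw [abs_zero, Real.zero_rpow (by linarith : P - 1 ≠ 0),
      Real.zero_rpow (by linarith : p₁ - 1 ≠ 0)] at h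
    simpa using h
  have hL : ∀ t : ℝ, |t| ≤ 1 → |f t| ≤ (2 + C₁) * |t| := by
    intro t ht1
    rcases eq_or_ne t 0 with rfl|ht0
    · simp [hf0]
    · have hx0 : 0 < |t| := abs_pos.mpr ht0
      have h19 : |t| ^ (P-1) ≤ |t| := by
        have h := Real.rpow_le_rpow_of_exponent_ge hx0 ht1 (by linarith : (1:ℝ) ≤ P - 1)
        rwa [Real.rpow_one] at h
      have h20 : |t| ^ (p₁-1) ≤ |t| := by
        have h := Real.rpow_le_rpow_of_exponent_ge hx0 ht1 (by linarith : (1:ℝ) ≤ p₁ - 1)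
        rwa [Real.rpow_one] at h
      have h := hgb₁ t
      have h21 := mul_le_mul_of_nonneg_left h20 hC₁.le
      linarith
  -- the test function
  set θ : ℝ → ℝ := fun t =>
    (if 0 < a₀ * t - f t then (1:ℝ) else if a₀ * t - f t < 0 then -1 else 0) * min |t| 1
    with hθdef
  set v : Esp N → ℝ := fun x => θ (u x) with hvdef
  have hWcont : Continuous (fun t : ℝ => a₀ * t - f t) :=
    (continuous_const.mul continuous_id).sub hcont
  have hθm : Measurable θ := by
    apply Measurable.mul
    · apply Measurable.ite (measurableSet_lt measurable_const hWcont.measurable)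
        measurable_const
      exact Measurable.ite (measurableSet_lt hWcont.measurable measurable_const)
        measurable_const measurable_const
    · exact continuous_abs.measurable.min measurable_const
  have hvm : AEStronglyMeasurable v volume :=
    (hθm.comp_aemeasurable hu.1.aestronglyMeasurable.aemeasurable).aestronglyMeasurable
  have hminnn : ∀ t : ℝ, (0:ℝ) ≤ min |t| 1 := fun t => le_min (abs_nonneg t) zero_le_one
  have hθabs : ∀ t : ℝ, |θ t| ≤ min |t| 1 := by
    intro t
    show |(if 0 < a₀ * t - f t then (1:ℝ) else if a₀ * t - f t < 0 then -1 else 0) * min |t| 1|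
      ≤ min |t| 1
    rw [abs_mul, abs_of_nonneg (hminnn t)]
    have hσ : |(if 0 < a₀ * t - f t then (1:ℝ) else if a₀ * t - f t < 0 then -1 else 0)| ≤ 1 := by
      split_ifs <;> simp
    calc |(if 0 < a₀ * t - f t then (1:ℝ) else if a₀ * t - f t < 0 then -1 else 0)| * min |t| 1
        ≤ 1 * min |t| 1 := mul_le_mul_of_nonneg_right hσ (hminnn t)
      _ = min |t| 1 := one_mul _
  have hθu : ∀ x, |v x| ≤ |u x| := fun x => (hθabs (u x)).trans (min_le_left _ _)
  have hθ1 : ∀ x, |v x| ≤ 1 := fun x => (hθabs (u x)).trans (min_le_right _ _)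
  have habsv : ∀ x : Esp N, a₀ * u x - f (u x) ≠ 0 → |v x| = min (|u x|) 1 := by
    intro x hW0
    show |(if 0 < a₀ * u x - f (u x) then (1:ℝ) else if a₀ * u x - f (u x) < 0 then -1 else 0)
      * min (|u x|) 1| = min (|u x|) 1
    rw [abs_mul, abs_of_nonneg (hminnn (u x))]
    have hσ : |(if 0 < a₀ * u x - f (u x) then (1:ℝ)
        else if a₀ * u x - f (u x) < 0 then -1 else 0)| = 1 := by
      rcases lt_trichotomy (a₀ * u x - f (u x)) 0 with hw|hw|hw
      · rw [if_neg (by linarith), if_pos hw]; simp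
      · exact absurd hw hW0
      · rw [if_pos hw]; simp
    rw [hσ, one_mul]
  have hv2 : MemLp v 2 volume := by
    apply hu.1.of_le hvm
    filter_upwards with x
    rw [Real.norm_eq_abs, Real.norm_eq_abs]
    exact hθu x
  have huv : Integrable (fun x : Esp N => u x * v x) volume := by
    apply Integrable.mono' hu2 (hu.1.aestronglyMeasurable.mul hvm)
    filter_upwards with x
    show ‖u x * v x‖ ≤ u x ^ 2
    rw [Real.norm_eq_abs, abs_mul]
    calc |u x| * |v x| ≤ |u x| * |u x| := mul_le_mul_of_nonneg_left (hθu x) (abs_nonneg _)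
      _ = u x ^ 2 := by rw [abs_mul_abs_self, ← pow_two]
  have hfum : AEStronglyMeasurable (fun x : Esp N => f (u x)) volume :=
    hcont.comp_aestronglyMeasurable hu.1.aestronglyMeasurable
  have hfuv : Integrable (fun x : Esp N => f (u x) * v x) volume := by
    apply Integrable.mono' ((hu2.const_mul (2 + C₁)).add hT.abs) (hfum.mul hvm)
    filter_upwards with x
    simp only [Pi.mul_apply, Pi.add_apply]
    rw [Real.norm_eq_abs, abs_mul]
    rcases le_or_gt (|u x|) 1 with h|h
    · have h22 := hL (u x) h
      have h23 : |f (u x)| * |v x| ≤ ((2 + C₁) * |u x|) * |u x| :=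
        mul_le_mul h22 (hθu x) (abs_nonneg _) (by positivity)
      have h24 : ((2 + C₁) * |u x|) * |u x| = (2 + C₁) * u x ^ 2 := by
        rw [mul_assoc, abs_mul_abs_self, ← pow_two]
      have h25 : (0:ℝ) ≤ |f (u x) * u x| := abs_nonneg _
      linarith
    · have h25 : |f (u x)| * |v x| ≤ |f (u x)| * 1 :=
        mul_le_mul_of_nonneg_left (hθ1 x) (abs_nonneg _)
      have h26 : |f (u x)| ≤ |f (u x)| * |u x| :=
        le_mul_of_one_le_right (abs_nonneg _) h.le
      rw [← abs_mul] at h26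
      have h27 : (0:ℝ) ≤ (2 + C₁) * u x ^ 2 := by positivity
      linarith
  rcases em (Integrable u volume) with huL1 | huL1
  · exact ae_zero_of_fourier_zero hN huL1 hFT0
  exfalso
  have hvnot : ¬ Integrable v volume := by
    intro hvint
    apply huL1
    apply Integrable.mono' (hvint.abs.add (hu2.const_mul r⁻¹)) hu.1.aestronglyMeasurable
    filter_upwards with x
    rw [Real.norm_eq_abs]
    simp only [Pi.add_apply]
    rcases eq_or_ne (u x) 0 with h|h
    · rw [h]
      simp
    rcases lt_or_ge (|u x|) r with h'|h'
    · have h27 := hgap (u x) h h'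
      have hW0 : a₀ * u x - f (u x) ≠ 0 := by
        intro hc; apply h27; linarith
      have h28 := habsv x hW0
      have h29 : min (|u x|) 1 = |u x| := min_eq_left (le_trans h'.le hr1)
      rw [h29] at h28
      have h30 : (0:ℝ) ≤ r⁻¹ * u x ^ 2 := by positivity
      rw [← h28]
      linarith [le_abs_self (v x), abs_nonneg (v x)]
    · have h30 : r * |u x| ≤ |u x| * |u x| := mul_le_mul_of_nonneg_right h' (abs_nonneg _)
      rw [abs_mul_abs_self, ← pow_two] at h30
      have h31 : |u x| ≤ r⁻¹ * u x ^ 2 := by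
        rw [show r⁻¹ * u x ^ 2 = u x ^ 2 / r by ring, le_div_iff₀ hr0]
        nlinarith
      linarith [abs_nonneg (v x)]
  have hMv : MemHs N s v := by
    refine ⟨hv2, ?_⟩
    have h32 : (fun ξ : Esp N => ‖ξ‖ ^ (2 * s) * ‖𝓕 (cplx v) ξ‖ ^ 2) = fun _ => (0:ℝ) := by
      funext ξ
      rw [fourier_eq_zero_of_not_integrable
        (fun hh => hvnot (integrable_cplx_iff.mp hh)) ξ]
      simp
    rw [h32]
    exact integrable_zero _ _ _
  have hid := hsol v hMv
  rw [fracInner_zero_of_fourier_zero s u v hFT0, zero_add] at hid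
  have hJint : Integrable (fun x : Esp N => (a₀ * u x - f (u x)) * v x) volume := by
    have h := (huv.const_mul a₀).sub hfuv
    refine h.congr (ae_of_all _ (fun x => ?_))
    simp only [Pi.sub_apply]
    ring
  have hJ0 : (∫ x : Esp N, (a₀ * u x - f (u x)) * v x) = 0 := by
    have h33 : (fun x : Esp N => (a₀ * u x - f (u x)) * v x)
        = fun x => a₀ * (u x * v x) - f (u x) * v x := by funext x; ring
    rw [h33, integral_sub (huv.const_mul a₀) hfuv, integral_const_mul, hid, sub_self]
  have hJnn : ∀ x : Esp N, 0 ≤ (a₀ * u x - f (u x)) * v x := by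
    intro x
    show 0 ≤ (a₀ * u x - f (u x)) *
      ((if 0 < a₀ * u x - f (u x) then (1:ℝ) else if a₀ * u x - f (u x) < 0 then -1 else 0)
        * min (|u x|) 1)
    rcases lt_trichotomy (a₀ * u x - f (u x)) 0 with hw|hw|hw
    · rw [if_neg (by linarith), if_pos hw]
      nlinarith [hminnn (u x)]
    · rw [hw]
      simp
    · rw [if_pos hw]
      nlinarith [hminnn (u x)]
  have hJae := (integral_eq_zero_iff_of_nonneg hJnn hJint).mp hJ0
  apply huL1
  apply Integrable.mono' (hu2.const_mul r⁻¹) hu.1.aestronglyMeasurable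
  filter_upwards [hJae] with x hx
  rw [Real.norm_eq_abs]
  have hx' : (a₀ * u x - f (u x)) * v x = 0 := by simpa using hx
  rcases eq_or_ne (u x) 0 with h|h
  · rw [h]
    simp
  rcases lt_or_ge (|u x|) r with h'|h'
  · exfalso
    have h27 := hgap (u x) h h'
    have hW0 : a₀ * u x - f (u x) ≠ 0 := by
      intro hc; apply h27; linarith
    rcases mul_eq_zero.mp hx' with hc|hc
    · exact hW0 hc
    · have h28 := habsv x hW0
      have h29 : min (|u x|) 1 = |u x| := min_eq_left (le_trans h'.le hr1)
      rw [h29, hc] at h28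
      rw [abs_zero] at h28
      exact h (abs_eq_zero.mp h28.symm)
  · have h30 : r * |u x| ≤ |u x| * |u x| := mul_le_mul_of_nonneg_right h' (abs_nonneg _)
    rw [abs_mul_abs_self, ← pow_two] at h30
    rw [show r⁻¹ * u x ^ 2 = u x ^ 2 / r by ring, le_div_iff₀ hr0]
    nlinarith
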